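/- Let (A;E) be an exact category with exact coproducts, let A^i, i ∈ I, be a set of objects of A, and let B be an object of A. Then the canonical homomorphism of abelian groups Ext(⨿_i A^i, B) → ∏_i Ext(A^i, B), which sends a conflation ξ to the family of its pullbacks along the structural morphisms a^i: A^i → ⨿_i A^i, is an isomorphism. -/

import Mathlib

open CategoryTheory CategoryTheory.Limits

universe w v u

namespace IdealApprox

/-- The data of an exact structure: a class of composable pairs
(the "conflations" `B ⟶ C ⟶ X`). -/
structure ExactStructureData (A : Type u) [Category.{v} A] [Preadditive A] :
    Type (max u v) where
  conf : ∀ ⦃B C X : A⦄, (B ⟶ C) → (C ⟶ X) → Prop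

/-- An ideal of an additive category: an additive subbifunctor of `Hom`. -/
structure Ideal (A : Type u) [Category.{v} A] [Preadditive A] : Type (max u v) where
  mem : ∀ ⦃X Y : A⦄, (X ⟶ Y) → Prop
  zero_mem : ∀ X Y : A, mem (0 : X ⟶ Y)
  add_mem : ∀ ⦃X Y : A⦄ ⦃f g : X ⟶ Y⦄, mem f → mem g → mem (f + g)
  neg_mem : ∀ ⦃X Y : A⦄ ⦃f : X ⟶ Y⦄, mem f → mem (-f)
  comp_mem : ∀ ⦃W X Y Z : A⦄ (h : W ⟶ X) ⦃g : X ⟶ Y⦄ (k : Y ⟶ Z), mem g → mem (h ≫ g ≫ k)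

/-- A class of morphisms of a category. -/
abbrev MorClass (A : Type u) [Category.{v} A] : Type (max u v) :=
  ∀ ⦃X Y : A⦄, (X ⟶ Y) → Prop

variable {A : Type u} [Category.{v} A] [Preadditive A]

/-- `(i, p)` is a kernel-cokernel pair. -/
structure IsKernelCokernelPair {B C X : A} (i : B ⟶ C) (p : C ⟶ X) : Prop where
  w : i ≫ p = 0
  isKernel : Nonempty (IsLimit (KernelFork.ofι i w))
  isCokernel : Nonempty (IsColimit (CokernelCofork.ofπ p w))

/-- The maximal candidate exact structure: all kernel-cokernel pairs.  On an abelian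
category (such as a module category) this is the standard exact (abelian) structure. -/
def maxExact (A : Type u) [Category.{v} A] [Preadditive A] : ExactStructureData A :=
  ⟨fun _ _ _ i p => IsKernelCokernelPair i p⟩

/-- `m` is an inflation: it occurs as the first map of a conflation. -/
def ExactStructureData.IsInflation (E : ExactStructureData A) {B C : A} (m : B ⟶ C) : Prop :=
  ∃ (X : A) (p : C ⟶ X), E.conf m p

/-- `p` is a deflation: it occurs as the second map of a conflation. -/
def ExactStructureData.IsDeflation (E : ExactStructureData A) {C X : A} (p : C ⟶ X) : Prop :=
  ∃ (B : A) (i : B ⟶ C), E.conf i p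

/-- The axioms of a Quillen exact category `(A; E)`. -/
structure ExactStructureData.IsExact (E : ExactStructureData A) : Prop where
  ker_coker : ∀ ⦃B C X : A⦄ ⦃i : B ⟶ C⦄ ⦃p : C ⟶ X⦄, E.conf i p → IsKernelCokernelPair i p
  iso_closed : ∀ ⦃B C X B' C' X' : A⦄ ⦃i : B ⟶ C⦄ ⦃p : C ⟶ X⦄ ⦃i' : B' ⟶ C'⦄ ⦃p' : C' ⟶ X'⦄
      (eB : B ≅ B') (eC : C ≅ C') (eX : X ≅ X'),
      i ≫ eC.hom = eB.hom ≫ i' → p ≫ eX.hom = eC.hom ≫ p' → E.conf i p → E.conf i' p'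
  id_inflation : ∀ X : A, E.IsInflation (𝟙 X)
  id_deflation : ∀ X : A, E.IsDeflation (𝟙 X)
  comp_inflation : ∀ ⦃X Y Z : A⦄ ⦃f : X ⟶ Y⦄ ⦃g : Y ⟶ Z⦄,
      E.IsInflation f → E.IsInflation g → E.IsInflation (f ≫ g)
  comp_deflation : ∀ ⦃X Y Z : A⦄ ⦃f : X ⟶ Y⦄ ⦃g : Y ⟶ Z⦄,
      E.IsDeflation f → E.IsDeflation g → E.IsDeflation (f ≫ g)
  pushout_inflation : ∀ ⦃X Y Z : A⦄ (m : X ⟶ Y) (f : X ⟶ Z), E.IsInflation m →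
      ∃ (W : A) (g : Y ⟶ W) (m' : Z ⟶ W), IsPushout m f g m' ∧ E.IsInflation m'
  pullback_deflation : ∀ ⦃X Y Z : A⦄ (p : Y ⟶ X) (f : Z ⟶ X), E.IsDeflation p →
      ∃ (W : A) (g : W ⟶ Y) (p' : W ⟶ Z), IsPullback g p' p f ∧ E.IsDeflation p'

/-- `Ext(a,b) = 0`: the composite `Ext(A1,B0) ⟶ Ext(A0,B1)` (pullback along `a`
followed by pushout along `b`) vanishes.  Elementwise: for every conflation
`B0 ⟶ C ⟶ A1` and every pushout of it along `b` (a conflation `B1 ⟶ C' ⟶ A1`),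
the morphism `a` lifts along the deflation `C' ⟶ A1`, i.e. the pullback along `a`
of the pushout along `b` splits. -/
def ExtZero (E : ExactStructureData A) {A0 A1 B0 B1 : A} (a : A0 ⟶ A1) (b : B0 ⟶ B1) : Prop :=
  ∀ ⦃C : A⦄ (i : B0 ⟶ C) (p : C ⟶ A1), E.conf i p →
    ∀ ⦃C' : A⦄ (c : C ⟶ C') (i' : B1 ⟶ C') (p' : C' ⟶ A1),
      IsPushout i b c i' → c ≫ p' = p → i' ≫ p' = 0 →
      ∃ s : A0 ⟶ C', s ≫ p' = a

/-- The class of morphisms left `Ext`-orthogonal to every member of `M`. -/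
def leftPerp (E : ExactStructureData A) (M : MorClass A) : MorClass A :=
  fun _ _ a => ∀ ⦃B0 B1 : A⦄ (b : B0 ⟶ B1), M b → ExtZero E a b

/-- The class of morphisms right `Ext`-orthogonal to every member of `M`. -/
def rightPerp (E : ExactStructureData A) (M : MorClass A) : MorClass A :=
  fun _ _ b => ∀ ⦃A0 A1 : A⦄ (a : A0 ⟶ A1), M a → ExtZero E a b

/-- Intersection of two classes of morphisms. -/
def interClass (M N : MorClass A) : MorClass A := fun _ _ f => M f ∧ N f

/-- Intersection of a set-indexed family of classes of morphisms. -/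
def interFamily {ι : Type w} (J : ι → MorClass A) : MorClass A := fun _ _ f => ∀ i, J i f

/-- `j : B ⟶ C0` is a special `J`-preenvelope of `B`: it belongs to `J` and appears as the
inflation of a conflation admitting a morphism of conflations (identity on `B`) whose
right-hand component lies in `⊥J`. -/
def IsSpecialPreenvelope (E : ExactStructureData A) (J : MorClass A) {B C0 : A}
    (j : B ⟶ C0) : Prop :=
  J j ∧ ∃ (A0 A1 C1 : A) (p0 : C0 ⟶ A0) (j' : B ⟶ C1) (p1 : C1 ⟶ A1)
      (c : C0 ⟶ C1) (a : A0 ⟶ A1),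
    E.conf j p0 ∧ E.conf j' p1 ∧ j ≫ c = j' ∧ p0 ≫ a = c ≫ p1 ∧ leftPerp E J a

/-- `J` is a special preenveloping ideal (class). -/
def SpecialPreenveloping (E : ExactStructureData A) (J : MorClass A) : Prop :=
  ∀ B : A, ∃ (C0 : A) (j : B ⟶ C0), IsSpecialPreenvelope E J j

/-- `e : D1 ⟶ B` is a special `I`-precover of `B`. -/
def IsSpecialPrecover (E : ExactStructureData A) (I : MorClass A) {D1 B : A}
    (e : D1 ⟶ B) : Prop :=
  I e ∧ ∃ (K0 K1 D0 : A) (i0 : K0 ⟶ D0) (p0 : D0 ⟶ B) (i1 : K1 ⟶ D1)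
      (k : K0 ⟶ K1) (d : D0 ⟶ D1),
    E.conf i0 p0 ∧ E.conf i1 e ∧ i0 ≫ d = k ≫ i1 ∧ d ≫ e = p0 ∧ rightPerp E I k

/-- `I` is a special precovering ideal (class). -/
def SpecialPrecovering (E : ExactStructureData A) (I : MorClass A) : Prop :=
  ∀ B : A, ∃ (D1 : A) (e : D1 ⟶ B), IsSpecialPrecover E I e

/-- The ideal of projective morphisms: morphisms left `Ext`-orthogonal to all morphisms. -/
def projClass (E : ExactStructureData A) : MorClass A :=
  fun _ _ p => ∀ ⦃B0 B1 : A⦄ (b : B0 ⟶ B1), ExtZero E p b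

/-- The ideal of injective morphisms: morphisms right `Ext`-orthogonal to all morphisms. -/
def injClass (E : ExactStructureData A) : MorClass A :=
  fun _ _ j => ∀ ⦃A0 A1 : A⦄ (a : A0 ⟶ A1), ExtZero E a j

/-- Every object is the codomain of a projective morphism. -/
def HasEnoughProjectiveMorphisms (E : ExactStructureData A) : Prop :=
  ∀ X : A, ∃ (P : A) (p : P ⟶ X), projClass E p

/-- Every object is the domain of an injective morphism. -/
def HasEnoughInjectiveMorphisms (E : ExactStructureData A) : Prop :=
  ∀ X : A, ∃ (Y : A) (j : X ⟶ Y), injClass E j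

/-- `(I, J)` is an ideal cotorsion pair: `I = ⊥J` and `J = I⊥`. -/
def IsIdealCotorsionPair (E : ExactStructureData A) (I J : MorClass A) : Prop :=
  (∀ ⦃X Y : A⦄ (f : X ⟶ Y), I f ↔ leftPerp E J f) ∧
  (∀ ⦃X Y : A⦄ (f : X ⟶ Y), J f ↔ rightPerp E I f)

/-- A complete ideal cotorsion pair: `I` is special precovering and `J` is special
preenveloping. -/
def IsCompleteIdealCotorsionPair (E : ExactStructureData A) (I J : MorClass A) : Prop :=
  IsIdealCotorsionPair E I J ∧ SpecialPrecovering E I ∧ SpecialPreenveloping E J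

/-- `c = b ⋆ a` is an ME (mono-epi) extension of the arrow `a` by the arrow `b`. -/
def IsMEExtension (E : ExactStructureData A) {B0 B1 A0 A1 C0 C1 : A}
    (b : B0 ⟶ B1) (a : A0 ⟶ A1) (c : C0 ⟶ C1) : Prop :=
  ∃ (i0 : B0 ⟶ C0) (p0 : C0 ⟶ A0) (i1 : B1 ⟶ C1) (p1 : C1 ⟶ A1)
    (Cm : A) (im : B0 ⟶ Cm) (pm : Cm ⟶ A1) (c1 : C0 ⟶ Cm) (c2 : Cm ⟶ C1),
    E.conf i0 p0 ∧ E.conf i1 p1 ∧ E.conf im pm ∧ c = c1 ≫ c2 ∧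
    i0 ≫ c1 = im ∧ c1 ≫ pm = p0 ≫ a ∧ im ≫ c2 = b ≫ i1 ∧ c2 ≫ p1 = pm

/-- `I ⋄ K` : the class of all ME-extensions `i ⋆ k` with `i ∈ I`, `k ∈ K`. -/
def diamond (E : ExactStructureData A) (I K : MorClass A) : MorClass A :=
  fun _ _ c => ∃ (B0 B1 A0 A1 : A) (b : B0 ⟶ B1) (a : A0 ⟶ A1),
    I b ∧ K a ∧ IsMEExtension E b a c

/-- `j` is a `J`-preenvelope (left approximation). -/
def IsPreenvelope (J : MorClass A) {B C : A} (j : B ⟶ C) : Prop :=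
  J j ∧ ∀ ⦃C' : A⦄ (j' : B ⟶ C'), J j' → ∃ f : C ⟶ C', j ≫ f = j'

/-- `J` is a preenveloping ideal (class). -/
def Preenveloping (J : MorClass A) : Prop :=
  ∀ B : A, ∃ (C : A) (j : B ⟶ C), IsPreenvelope J j

/-- `e` is an `I`-precover (right approximation). -/
def IsPrecover (I : MorClass A) {D B : A} (e : D ⟶ B) : Prop :=
  I e ∧ ∀ ⦃D' : A⦄ (e' : D' ⟶ B), I e' → ∃ f : D' ⟶ D, f ≫ e = e'

/-- `I` is a precovering ideal (class). -/
def Precovering (I : MorClass A) : Prop :=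
  ∀ B : A, ∃ (D : A) (e : D ⟶ B), IsPrecover I e

/-- `J` is monic preenveloping: every object admits a preenvelope which is an inflation. -/
def MonicPreenveloping (E : ExactStructureData A) (J : MorClass A) : Prop :=
  ∀ B : A, ∃ (C : A) (j : B ⟶ C), E.IsInflation j ∧ IsPreenvelope J j

/-- `I` is epic precovering: every object admits a precover which is a deflation. -/
def EpicPrecovering (E : ExactStructureData A) (I : MorClass A) : Prop :=
  ∀ B : A, ∃ (D : A) (e : D ⟶ B), E.IsDeflation e ∧ IsPrecover I e

/-- A conflation of arrows `b ⟶ c ⟶ a` in `(Arr(A); Arr(E))`, encoded componentwise: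
two conflations `(i0, p0)`, `(i1, p1)` together with the commutativity of the two squares. -/
def IsArrowConf (E : ExactStructureData A) {B0 B1 C0 C1 A0 A1 : A}
    (b : B0 ⟶ B1) (c : C0 ⟶ C1) (a : A0 ⟶ A1)
    (i0 : B0 ⟶ C0) (p0 : C0 ⟶ A0) (i1 : B1 ⟶ C1) (p1 : C1 ⟶ A1) : Prop :=
  E.conf i0 p0 ∧ E.conf i1 p1 ∧ i0 ≫ c = b ≫ i1 ∧ p0 ≫ a = c ≫ p1

/-- An ME (mono-epi) conflation of arrows, encoded componentwise. -/
def IsMEArrowConf (E : ExactStructureData A) {B0 B1 C0 C1 A0 A1 : A}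
    (b : B0 ⟶ B1) (c : C0 ⟶ C1) (a : A0 ⟶ A1)
    (i0 : B0 ⟶ C0) (p0 : C0 ⟶ A0) (i1 : B1 ⟶ C1) (p1 : C1 ⟶ A1) : Prop :=
  IsArrowConf E b c a i0 p0 i1 p1 ∧
  ∃ (Cm : A) (im : B0 ⟶ Cm) (pm : Cm ⟶ A1) (c1 : C0 ⟶ Cm) (c2 : Cm ⟶ C1),
    E.conf im pm ∧ c = c1 ≫ c2 ∧ i0 ≫ c1 = im ∧ c1 ≫ pm = p0 ≫ a ∧
    im ≫ c2 = b ≫ i1 ∧ c2 ≫ p1 = pm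

/-- Equivalence (isomorphism fixing the two end arrows) of conflations of arrows. -/
def ArrowConfEquiv {B0 B1 C0 C1 D0 D1 A0 A1 : A}
    (c : C0 ⟶ C1) (i0 : B0 ⟶ C0) (p0 : C0 ⟶ A0) (i1 : B1 ⟶ C1) (p1 : C1 ⟶ A1)
    (d : D0 ⟶ D1) (j0 : B0 ⟶ D0) (q0 : D0 ⟶ A0) (j1 : B1 ⟶ D1) (q1 : D1 ⟶ A1) : Prop :=
  ∃ (e0 : C0 ≅ D0) (e1 : C1 ≅ D1),
    c ≫ e1.hom = e0.hom ≫ d ∧ i0 ≫ e0.hom = j0 ∧ e0.hom ≫ q0 = p0 ∧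
    i1 ≫ e1.hom = j1 ∧ e1.hom ≫ q1 = p1

/-- `(A; E)` has exact coproducts: coproducts exist and a coproduct of conflations is a
conflation. -/
def HasExactCoproducts [HasCoproducts.{w} A] (E : ExactStructureData A) : Prop :=
  ∀ (ι : Type w) (B C X : ι → A) (i : ∀ j, B j ⟶ C j) (p : ∀ j, C j ⟶ X j),
    (∀ j, E.conf (i j) (p j)) → E.conf (Limits.Sigma.map i) (Limits.Sigma.map p)

/-- `(A; E)` has exact products: products exist and a product of conflations is a
conflation. -/
def HasExactProducts [HasProducts.{w} A] (E : ExactStructureData A) : Prop :=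
  ∀ (ι : Type w) (B C X : ι → A) (i : ∀ j, B j ⟶ C j) (p : ∀ j, C j ⟶ X j),
    (∀ j, E.conf (i j) (p j)) → E.conf (Limits.Pi.map i) (Limits.Pi.map p)

/-- The ideal generated by a set-indexed family of morphisms: finite sums of
composites through the generators. -/
def genIdeal {ι : Type w} {X0 X1 : ι → A} (m : ∀ i, X0 i ⟶ X1 i) : MorClass A :=
  fun X Y f => ∃ (n : ℕ) (j : Fin n → ι) (g : ∀ k : Fin n, X ⟶ X0 (j k))
    (h : ∀ k : Fin n, X1 (j k) ⟶ Y),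
    f = ∑ k : Fin n, g k ≫ m (j k) ≫ h k

/-- The sum of a set-indexed family of ideals: finite sums of members. -/
def idealFamilySum {ι : Type w} (I : ι → Ideal A) : MorClass A :=
  fun X Y f => ∃ (n : ℕ) (j : Fin n → ι) (g : Fin n → (X ⟶ Y)),
    (∀ k, (I (j k)).mem (g k)) ∧ f = ∑ k : Fin n, g k

/-- Containment of ideals. -/
def Ideal.le (I J : Ideal A) : Prop := ∀ ⦃X Y : A⦄ ⦃f : X ⟶ Y⦄, I.mem f → J.mem f

/-- Intersection of two ideals. -/
def Ideal.inf (I J : Ideal A) : Ideal A where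
  mem := fun _ _ f => I.mem f ∧ J.mem f
  zero_mem := fun X Y => ⟨I.zero_mem X Y, J.zero_mem X Y⟩
  add_mem := fun _ _ _ _ hf hg => ⟨I.add_mem hf.1 hg.1, J.add_mem hf.2 hg.2⟩
  neg_mem := fun _ _ _ hf => ⟨I.neg_mem hf.1, J.neg_mem hf.2⟩
  comp_mem := fun _ _ _ _ h _ k hg => ⟨I.comp_mem h k hg.1, J.comp_mem h k hg.2⟩

/-- Sum of two ideals. -/
def Ideal.sum (I J : Ideal A) : Ideal A where
  mem := fun _ _ f => ∃ g h, I.mem g ∧ J.mem h ∧ f = g + h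
  zero_mem := fun X Y => ⟨0, 0, I.zero_mem X Y, J.zero_mem X Y, by simp⟩
  add_mem := by
    rintro X Y f g ⟨f1, f2, hf1, hf2, rfl⟩ ⟨g1, g2, hg1, hg2, rfl⟩
    exact ⟨f1 + g1, f2 + g2, I.add_mem hf1 hg1, J.add_mem hf2 hg2, by abel⟩
  neg_mem := by
    rintro X Y f ⟨f1, f2, h1, h2, rfl⟩
    exact ⟨-f1, -f2, I.neg_mem h1, J.neg_mem h2, by abel⟩
  comp_mem := by
    rintro W X Y Z h g k ⟨g1, g2, h1, h2, rfl⟩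
    exact ⟨h ≫ g1 ≫ k, h ≫ g2 ≫ k, I.comp_mem h k h1, J.comp_mem h k h2, by
      simp [Preadditive.add_comp, Preadditive.comp_add]⟩

/-- An ideal closed under set-indexed coproducts of morphisms. -/
def ClosedUnderCoproducts [HasCoproducts.{w} A] (I : Ideal A) : Prop :=
  ∀ ⦃ι : Type w⦄ ⦃X0 X1 : ι → A⦄ (f : ∀ i, X0 i ⟶ X1 i),
    (∀ i, I.mem (f i)) → I.mem (Limits.Sigma.map f)

/-- An ideal closed under ME-extensions by projective morphisms. -/
def ClosedUnderProjME (E : ExactStructureData A) (I : Ideal A) : Prop :=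
  ∀ ⦃P0 P1 K0 K1 C0 C1 : A⦄ (p : P0 ⟶ P1) (k : K0 ⟶ K1) (c : C0 ⟶ C1),
    projClass E p → I.mem k → IsMEExtension E p k c → I.mem c

/-- `Ext_{Arr(A)}(a, b)` is a set: there is a set-indexed family of conflations of arrows
`b ⟶ c^ζ ⟶ a` representing every conflation of arrows from `b` to `a` up to equivalence. -/
def ExtArrowSmall (E : ExactStructureData A) {A0 A1 B0 B1 : A}
    (a : A0 ⟶ A1) (b : B0 ⟶ B1) : Prop :=
  ∃ (ι : Type w) (C0 C1 : ι → A) (c : ∀ z, C0 z ⟶ C1 z)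
    (i0 : ∀ z, B0 ⟶ C0 z) (p0 : ∀ z, C0 z ⟶ A0) (i1 : ∀ z, B1 ⟶ C1 z) (p1 : ∀ z, C1 z ⟶ A1),
    (∀ z, IsArrowConf E b (c z) a (i0 z) (p0 z) (i1 z) (p1 z)) ∧
    ∀ ⦃D0 D1 : A⦄ (d : D0 ⟶ D1) (j0 : B0 ⟶ D0) (q0 : D0 ⟶ A0) (j1 : B1 ⟶ D1) (q1 : D1 ⟶ A1),
      IsArrowConf E b d a j0 q0 j1 q1 →
      ∃ z, ArrowConfEquiv (c z) (i0 z) (p0 z) (i1 z) (p1 z) d j0 q0 j1 q1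

/-- `Ext(X, B)` is a set: there is a set-indexed family of conflations `B ⟶ C^z ⟶ X`
representing every conflation from `B` to `X` up to equivalence. -/
def ExtObjSmall (E : ExactStructureData A) (X B : A) : Prop :=
  ∃ (ι : Type w) (C : ι → A) (m : ∀ z, B ⟶ C z) (p : ∀ z, C z ⟶ X),
    (∀ z, E.conf (m z) (p z)) ∧
    ∀ ⦃D : A⦄ (m' : B ⟶ D) (p' : D ⟶ X), E.conf m' p' →
      ∃ z, ∃ e : C z ≅ D, m z ≫ e.hom = m' ∧ e.hom ≫ p' = p z

/-- `Add X`: direct summands of coproducts of copies of `X`. -/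
def AddClosure [HasCoproducts.{w} A] (X : A) : A → Prop := fun M =>
  ∃ (ι : Type w) (s : M ⟶ ∐ (fun _ : ι => X)) (r : (∐ fun _ : ι => X) ⟶ M), s ≫ r = 𝟙 M

/-- The object ideal of morphisms factoring through an object of `S`. -/
def objIdeal (S : A → Prop) : MorClass A := fun X Y f =>
  ∃ (M : A) (g : X ⟶ M) (h : M ⟶ Y), S M ∧ f = g ≫ h


section AuxStatement8

/-- A cokernel (given as a colimit cofork) is an epimorphism. -/
lemma aux_cofork_epi {B C X : A} {i : B ⟶ C} {p : C ⟶ X} {w : i ≫ p = 0}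
    (hc : IsColimit (CokernelCofork.ofπ p w)) {T : A} {a b : X ⟶ T}
    (h : p ≫ a = p ≫ b) : a = b :=
  Cofork.IsColimit.hom_ext hc (by simpa using h)

/-- A kernel (given as a limit fork) is a monomorphism. -/
lemma aux_fork_mono {B C X : A} {i : B ⟶ C} {p : C ⟶ X} {w : i ≫ p = 0}
    (hc : IsLimit (KernelFork.ofι i w)) {T : A} {a b : T ⟶ B}
    (h : a ≫ i = b ≫ i) : a = b :=
  Fork.IsLimit.hom_ext hc (by simpa using h)

/-- **Lemma A**: the pushout of a conflation along an arbitrary morphism is again a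
conflation, with the same quotient object. -/
lemma aux_pushout_conf (E : ExactStructureData A) (hE : E.IsExact)
    {B C X B' : A} {i : B ⟶ C} {p : C ⟶ X} (h : E.conf i p) (b : B ⟶ B') :
    ∃ (W : A) (c : C ⟶ W) (i' : B' ⟶ W) (q : W ⟶ X),
      IsPushout i b c i' ∧ E.conf i' q ∧ c ≫ q = p ∧ i' ≫ q = 0 := by
  obtain ⟨W, c, i', hpo, hinf⟩ := hE.pushout_inflation i b ⟨X, p, h⟩
  obtain ⟨X₀, p₀, h₀⟩ := hinf
  have kk := hE.ker_coker h
  have kk₀ := hE.ker_coker h₀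
  obtain ⟨hcok⟩ := kk.isCokernel
  obtain ⟨hcok₀⟩ := kk₀.isCokernel
  have hw : i ≫ p = b ≫ (0 : B' ⟶ X) := by simp [kk.w]
  refine ⟨W, c, i', hpo.desc p 0 hw, hpo, ?_, hpo.inl_desc _ _ _, hpo.inr_desc _ _ _⟩
  set q : W ⟶ X := hpo.desc p 0 hw with hqdef
  have hcq : c ≫ q = p := hpo.inl_desc _ _ _
  have hiq : i' ≫ q = 0 := hpo.inr_desc _ _ _
  -- `q` is a cokernel of `i'`
  have hcolim : IsColimit (CokernelCofork.ofπ q hiq) := by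
    refine CokernelCofork.IsColimit.ofπ q hiq
      (fun {Z'} g' hg' => (CokernelCofork.IsColimit.desc' hcok (c ≫ g')
        (by rw [← Category.assoc, hpo.w, Category.assoc, hg', comp_zero])).1)
      (fun {Z'} g' hg' => ?_) (fun {Z'} g' hg' mm hmm => ?_)
    · apply hpo.hom_ext
      · rw [← Category.assoc, hcq]
        simpa using (CokernelCofork.IsColimit.desc' hcok (c ≫ g')
          (by rw [← Category.assoc, hpo.w, Category.assoc, hg', comp_zero])).2
      · rw [← Category.assoc, hiq, zero_comp, hg']
    · have hpepi : ∀ {T : A} {a b : X ⟶ T}, p ≫ a = p ≫ b → a = b :=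
        fun hab => aux_cofork_epi hcok hab
      apply hpepi
      have h2 := (CokernelCofork.IsColimit.desc' hcok (c ≫ g')
        (by rw [← Category.assoc, hpo.w, Category.assoc, hg', comp_zero])).2
      simp only [Cofork.π_ofπ] at h2
      rw [h2, ← hcq, Category.assoc, hmm]
  -- compare the two cokernels of `i'`
  obtain ⟨a, ha⟩ := CokernelCofork.IsColimit.desc' hcok₀ q hiq
  obtain ⟨a', ha'⟩ := CokernelCofork.IsColimit.desc' hcolim p₀ kk₀.w
  simp only [Cofork.π_ofπ] at ha ha'
  have haa' : a ≫ a' = 𝟙 X₀ := by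
    apply aux_cofork_epi hcok₀
    rw [← Category.assoc, ha, ha', Category.comp_id]
  have ha'a : a' ≫ a = 𝟙 X := by
    apply aux_cofork_epi hcolim
    rw [← Category.assoc, ha', ha, Category.comp_id]
  exact hE.iso_closed (Iso.refl B') (Iso.refl W) ⟨a, a', haa', ha'a⟩
    (by simp) (by simpa using ha) h₀

/-- **Lemma B** (short five lemma): a morphism of conflations which is the identity
on both ends is an isomorphism. -/
lemma aux_conf_comparison_iso (E : ExactStructureData A) (hE : E.IsExact)
    {B C C' X : A} {i : B ⟶ C} {p : C ⟶ X} {i' : B ⟶ C'} {p' : C' ⟶ X}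
    (h : E.conf i p) (h' : E.conf i' p') {u : C ⟶ C'}
    (hu1 : i ≫ u = i') (hu2 : u ≫ p' = p) :
    ∃ v : C' ⟶ C, u ≫ v = 𝟙 C ∧ v ≫ u = 𝟙 C' := by
  have kk := hE.ker_coker h
  have kk' := hE.ker_coker h'
  obtain ⟨hker⟩ := kk.isKernel
  obtain ⟨hcok⟩ := kk.isCokernel
  obtain ⟨hker'⟩ := kk'.isKernel
  obtain ⟨hcok'⟩ := kk'.isCokernel
  -- `u` is an epimorphism
  have hepi : ∀ {T : A} (t t' : C' ⟶ T), u ≫ t = u ≫ t' → t = t' := by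
    intro T t t' ht
    have h1 : i' ≫ (t - t') = 0 := by
      rw [← hu1, Category.assoc, Preadditive.comp_sub, ht, sub_self, comp_zero]
    obtain ⟨s, hs⟩ := CokernelCofork.IsColimit.desc' hcok' (t - t') h1
    simp only [Cofork.π_ofπ] at hs
    have hps : p ≫ s = 0 := by
      rw [← hu2, Category.assoc, hs, Preadditive.comp_sub, ht, sub_self]
    have hs0 : s = 0 := aux_cofork_epi hcok (by rw [hps, comp_zero])
    have : t - t' = 0 := by rw [← hs, hs0, comp_zero]
    linear_combination (norm := abel) this
  -- pull back `p'` along `p`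
  obtain ⟨W, g, pt, hpb, hdef⟩ := hE.pullback_deflation p' p ⟨B, i', h'⟩
  obtain ⟨K, k, hk⟩ := hdef
  have kkW := hE.ker_coker hk
  obtain ⟨hkerW⟩ := kkW.isKernel
  -- `g` is a deflation: compare with the pullback of `p` along `p'`
  obtain ⟨W₂, g₂, p₂, hpb₂, hdef₂⟩ := hE.pullback_deflation p p' ⟨B, i, h⟩
  obtain ⟨K₂, k₂, hk₂⟩ := hdef₂
  have hpbflip : IsPullback pt g p p' := hpb.flip
  obtain ⟨K', k', hk'⟩ : ∃ (K' : A) (k' : K' ⟶ W), E.conf k' g := by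
    refine ⟨K₂, k₂ ≫ (hpbflip.isoIsPullback _ _ hpb₂).inv, ?_⟩
    refine hE.iso_closed (Iso.refl K₂) (hpbflip.isoIsPullback _ _ hpb₂).symm
      (Iso.refl C') (by simp) ?_ hk₂
    simp only [Iso.refl_hom, Category.comp_id, Iso.symm_hom]
    rw [Iso.eq_inv_comp]
    exact hpbflip.isoIsPullback_hom_snd _ _ hpb₂
  have kkg := hE.ker_coker hk'
  obtain ⟨hcokg⟩ := kkg.isCokernel
  -- liftings to the pullback
  obtain ⟨r, hrg, hrp⟩ : ∃ r : C ⟶ W, r ≫ g = u ∧ r ≫ pt = 𝟙 C :=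
    ⟨hpb.lift u (𝟙 C) (by simpa using hu2), hpb.lift_fst _ _ _, hpb.lift_snd _ _ _⟩
  obtain ⟨j, hjg, hjp⟩ : ∃ j : B ⟶ W, j ≫ g = i' ∧ j ≫ pt = 0 :=
    ⟨hpb.lift i' 0 (by simp [kk'.w]), hpb.lift_fst _ _ _, hpb.lift_snd _ _ _⟩
  obtain ⟨j₂, hj2g, hj2p⟩ : ∃ j₂ : B ⟶ W, j₂ ≫ g = 0 ∧ j₂ ≫ pt = i :=
    ⟨hpb.lift 0 i (by simp [kk.w]), hpb.lift_fst _ _ _, hpb.lift_snd _ _ _⟩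
  -- `i'` is a monomorphism
  have hmono' : ∀ {T : A} (a b : T ⟶ B), a ≫ i' = b ≫ i' → a = b :=
    fun a b hab => aux_fork_mono hker' hab
  -- `k` factors through `j`
  obtain ⟨s', hs'⟩ := KernelFork.IsLimit.lift' hker' (k ≫ g)
    (by rw [Category.assoc, hpb.w, ← Category.assoc, kkW.w, zero_comp])
  simp only [Fork.ι_ofι] at hs'
  have hkj : k = s' ≫ j := by
    apply hpb.hom_ext
    · rw [Category.assoc, hjg, hs']
    · rw [Category.assoc, hjp, comp_zero, kkW.w]
  -- the retraction `q`
  obtain ⟨q₀, hq₀⟩ := KernelFork.IsLimit.lift' hkerW (𝟙 W - pt ≫ r)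
    (by rw [Preadditive.sub_comp, Category.id_comp, Category.assoc, hrp, Category.comp_id, sub_self])
  simp only [Fork.ι_ofι] at hq₀
  have hqj : (q₀ ≫ s') ≫ j = 𝟙 W - pt ≫ r := by
    rw [Category.assoc, ← hkj, hq₀]
  have hj2q : j₂ ≫ (q₀ ≫ s') = -𝟙 B := by
    apply hmono'
    calc (j₂ ≫ (q₀ ≫ s')) ≫ i'
        = j₂ ≫ ((q₀ ≫ s') ≫ j) ≫ g := by simp only [Category.assoc, hjg]
      _ = j₂ ≫ (𝟙 W - pt ≫ r) ≫ g := by rw [hqj]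
      _ = j₂ ≫ g - j₂ ≫ pt ≫ r ≫ g := by
          simp only [Preadditive.sub_comp, Preadditive.comp_sub, Category.id_comp,
            Category.assoc]
      _ = 0 - i ≫ u := by rw [hj2g, reassoc_of% hj2p, hrg]
      _ = (-𝟙 B) ≫ i' := by rw [hu1]; simp
  -- `k'` factors through `j₂`
  obtain ⟨s₂, hs₂⟩ := KernelFork.IsLimit.lift' hker (k' ≫ pt)
    (by rw [Category.assoc, ← hpb.w, ← Category.assoc, kkg.w, zero_comp])
  simp only [Fork.ι_ofι] at hs₂
  have hk'j2 : k' = s₂ ≫ j₂ := by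
    apply hpb.hom_ext
    · rw [Category.assoc, hj2g, comp_zero, kkg.w]
    · rw [Category.assoc, hj2p, hs₂]
  -- descend `pt + q ≫ i` along `g`
  have hk'P : k' ≫ (pt + (q₀ ≫ s') ≫ i) = 0 := by
    rw [hk'j2]
    simp only [Preadditive.comp_add, Preadditive.add_comp, Category.assoc]
    rw [hj2p, reassoc_of% hj2q]
    simp
  obtain ⟨v, hv⟩ := CokernelCofork.IsColimit.desc' hcokg (pt + (q₀ ≫ s') ≫ i) hk'P
  simp only [Cofork.π_ofπ] at hv
  have hrq : (r ≫ q₀ ≫ s') ≫ i' = 0 := by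
    calc (r ≫ q₀ ≫ s') ≫ i'
        = r ≫ ((q₀ ≫ s') ≫ j) ≫ g := by simp only [Category.assoc, hjg]
      _ = r ≫ (𝟙 W - pt ≫ r) ≫ g := by rw [hqj]
      _ = 0 := by
          simp only [Preadditive.sub_comp, Preadditive.comp_sub, Category.id_comp,
            Category.assoc]
          rw [reassoc_of% hrp]
          simp
  have hrq0 : r ≫ q₀ ≫ s' = 0 := hmono' _ _ (by rw [hrq, zero_comp])
  have huv : u ≫ v = 𝟙 C := by
    rw [← hrg, Category.assoc, hv, Preadditive.comp_add, hrp, ← Category.assoc, hrq0,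
      zero_comp, add_zero]
  refine ⟨v, huv, ?_⟩
  apply hepi
  rw [← Category.assoc, huv, Category.id_comp, Category.comp_id]

end AuxStatement8

variable [HasCoproducts.{w} A]

/-- Proposition: the canonical morphism.  In an exact category with
exact coproducts the canonical map `Ext(∐ X, B) ⟶ ∏ Ext(X i, B)`, given by pullback
along the structural morphisms `Sigma.ι X i`, is an isomorphism.  Stated on
representatives: (surjectivity) every family of conflations `B ⟶ Ci i ⟶ X i` arises,
via pullback along the `Sigma.ι X i`, from a single conflation `B ⟶ C ⟶ ∐ X`;
(injectivity) two conflations `B ⟶ C ⟶ ∐ X` having equivalent pullbacks along every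
`Sigma.ι X i` are equivalent. -/
theorem statement8 (E : ExactStructureData A) (hE : E.IsExact)
    (hco : HasExactCoproducts.{w} E) {ι : Type w} (X : ι → A) (B : A) :
    (∀ (Ci : ι → A) (mi : ∀ i, B ⟶ Ci i) (pi : ∀ i, Ci i ⟶ X i),
        (∀ i, E.conf (mi i) (pi i)) →
        ∃ (C : A) (m : B ⟶ C) (p : C ⟶ ∐ X), E.conf m p ∧
          ∀ i, ∃ d : Ci i ⟶ C, mi i ≫ d = m ∧ d ≫ p = pi i ≫ Limits.Sigma.ι X i) ∧
    (∀ (C C' : A) (m : B ⟶ C) (p : C ⟶ ∐ X) (m' : B ⟶ C') (p' : C' ⟶ ∐ X),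
        E.conf m p → E.conf m' p' →
        (∀ i, ∃ (Ci : A) (mi : B ⟶ Ci) (pi : Ci ⟶ X i) (d : Ci ⟶ C) (d' : Ci ⟶ C'),
            E.conf mi pi ∧
            mi ≫ d = m ∧ d ≫ p = pi ≫ Limits.Sigma.ι X i ∧
            mi ≫ d' = m' ∧ d' ≫ p' = pi ≫ Limits.Sigma.ι X i) →
        ∃ e : C ≅ C', m ≫ e.hom = m' ∧ e.hom ≫ p' = p) := by
  constructor
  · -- surjectivity
    intro Ci mi pi hconf
    have hcc := hco ι (fun _ => B) Ci X mi pi hconf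
    obtain ⟨C, c, m, q, hpo, hcf, hcq, _⟩ :=
      aux_pushout_conf E hE hcc (Sigma.desc fun _ => 𝟙 B)
    refine ⟨C, m, q, hcf, fun i => ⟨Sigma.ι Ci i ≫ c, ?_, ?_⟩⟩
    · have h1 : Sigma.ι (fun _ : ι => B) i ≫ Limits.Sigma.map mi = mi i ≫ Sigma.ι Ci i := by simp
      calc mi i ≫ Sigma.ι Ci i ≫ c
          = (Sigma.ι (fun _ : ι => B) i ≫ Limits.Sigma.map mi) ≫ c := by
            rw [h1, Category.assoc]
        _ = Sigma.ι (fun _ : ι => B) i ≫ (Sigma.desc fun _ => 𝟙 B) ≫ m := by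
            rw [Category.assoc, hpo.w]
        _ = m := by simp
    · rw [Category.assoc, hcq]
      simp
  · -- injectivity
    intro C C' m p m' p' hc hc' hcom
    choose Ci mi pi d d' hconf h1 h2 h3 h4 using hcom
    have hcc := hco ι (fun _ => B) Ci X mi pi hconf
    obtain ⟨C₀, c₀, m₀, q₀, hpo, hcf₀, hcq₀, hm₀q₀⟩ :=
      aux_pushout_conf E hE hcc (Sigma.desc fun _ => 𝟙 B)
    have key : ∀ (Cx : A) (mx : B ⟶ Cx) (px : Cx ⟶ ∐ X) (dx : ∀ i, Ci i ⟶ Cx),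
        E.conf mx px → (∀ i, mi i ≫ dx i = mx) →
        (∀ i, dx i ≫ px = pi i ≫ Sigma.ι X i) →
        ∃ u : C₀ ⟶ Cx, (m₀ ≫ u = mx ∧ u ≫ px = q₀) ∧
          ∃ v : Cx ⟶ C₀, u ≫ v = 𝟙 C₀ ∧ v ≫ u = 𝟙 Cx := by
      intro Cx mx px dx hcx hdx1 hdx2
      have hD : Limits.Sigma.map mi ≫ Sigma.desc dx = (Sigma.desc fun _ => 𝟙 B) ≫ mx := by
        apply colimit.hom_ext
        intro i
        rcases i with ⟨i⟩
        simp [hdx1 i]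
      refine ⟨hpo.desc (Sigma.desc dx) mx hD, ⟨hpo.inr_desc _ _ _, ?_⟩, ?_⟩
      · apply hpo.hom_ext
        · rw [← Category.assoc, hpo.inl_desc, hcq₀]
          apply colimit.hom_ext
          intro i
          rcases i with ⟨i⟩
          simp [hdx2 i]
        · rw [← Category.assoc, hpo.inr_desc, (hE.ker_coker hcx).w, hm₀q₀]
      · -- the comparison is an isomorphism, by the short five lemma
        have hup : hpo.desc (Sigma.desc dx) mx hD ≫ px = q₀ := by
          apply hpo.hom_ext
          · rw [← Category.assoc, hpo.inl_desc, hcq₀]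
            apply colimit.hom_ext
            intro i
            rcases i with ⟨i⟩
            simp [hdx2 i]
          · rw [← Category.assoc, hpo.inr_desc, (hE.ker_coker hcx).w, hm₀q₀]
        exact aux_conf_comparison_iso E hE hcf₀ hcx (hpo.inr_desc _ _ _) hup
    obtain ⟨u, ⟨hu1, hu2⟩, v, hv1, hv2⟩ := key C m p d hc h1 h2
    obtain ⟨u', ⟨hu1', hu2'⟩, v', hv1', hv2'⟩ := key C' m' p' d' hc' h3 h4
    refine ⟨⟨v ≫ u', v' ≫ u, ?_, ?_⟩, ?_, ?_⟩
    · rw [Category.assoc, ← Category.assoc u', hv1', Category.id_comp, hv2]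
    · rw [Category.assoc, ← Category.assoc u, hv1, Category.id_comp, hv2']
    · have hmv : m ≫ v = m₀ := by rw [← hu1, Category.assoc, hv1, Category.comp_id]
      show m ≫ v ≫ u' = m'
      rw [← Category.assoc, hmv, hu1']
    · show (v ≫ u') ≫ p' = p
      rw [Category.assoc, hu2', ← hu2, ← Category.assoc, hv2, Category.id_comp]

end IdealApprox
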